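/- arXiv:2010.11207 — 3 statements merged into one kernel-verified Lean document; each statement's English description precedes it below -/
import Mathlib

section
/- There is a universal constant C (independent of L and f) such that every probability density f on Ω satisfies the logarithmic Sobolev inequality H(f) ≤ C·L²·D(f). -/
open Finset


private lemma klsi_sq_sum_le {ι : Type*} (s : Finset ι) (g : ι → ℝ) :
    (∑ i ∈ s, g i) ^ 2 ≤ (s.card : ℝ) * ∑ i ∈ s, g i ^ 2 := by
  have h := Finset.sum_mul_sq_le_sq_mul_sq s (fun _ => (1:ℝ)) g
  simpa using h

private lemma klsi_mul_log_mul (c u : ℝ) (hc : 0 < c) (hu : 0 ≤ u) :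
    u * Real.log (c * u) = u * Real.log c + u * Real.log u := by
  rcases eq_or_lt_of_le hu with h | h
  · simp [← h]
  · rw [Real.log_mul (ne_of_gt hc) (ne_of_gt h)]; ring

private lemma klsi_two_point (u v : ℝ) (hu : 0 ≤ u) (hv : 0 ≤ v) :
    u * Real.log u + v * Real.log v - (u + v) * Real.log ((u + v) / 2)
      ≤ 2 * (Real.sqrt u - Real.sqrt v) ^ 2 := by
  rcases eq_or_lt_of_le (add_nonneg hu hv) with h0 | h0
  · have h1 : u = 0 := by linarith [hu, hv]
    have h2 : v = 0 := by linarith [hu, hv]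
    simp [h1, h2]
  set m : ℝ := (u + v) / 2 with hm
  have hm0 : 0 < m := by positivity
  -- pointwise bound
  have key : ∀ w : ℝ, 0 ≤ w → w * Real.log w - w * Real.log m ≤ w * (w / m - 1) := by
    intro w hw
    rcases eq_or_lt_of_le hw with h | h
    · simp [← h]
    · have : Real.log w - Real.log m ≤ w / m - 1 := by
        have := Real.log_le_sub_one_of_pos (show (0:ℝ) < w / m by positivity)
        rwa [Real.log_div (ne_of_gt h) (ne_of_gt hm0)] at this
      calc w * Real.log w - w * Real.log m = w * (Real.log w - Real.log m) := by ring
        _ ≤ w * (w / m - 1) := by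
            exact mul_le_mul_of_nonneg_left this hw
  have h1 := key u hu
  have h2 := key v hv
  have hstep : u * Real.log u + v * Real.log v - (u + v) * Real.log m
      ≤ (u - v) ^ 2 / (u + v) := by
    have e1 : u * (u / m - 1) + v * (v / m - 1) = (u - v) ^ 2 / (u + v) := by
      rw [hm]; field_simp; ring
    nlinarith [h1, h2]
  refine hstep.trans ?_
  have su := Real.sq_sqrt hu
  have sv := Real.sq_sqrt hv
  have su0 := Real.sqrt_nonneg u
  have sv0 := Real.sqrt_nonneg v
  rw [div_le_iff₀ h0]
  nlinarith [sq_nonneg (Real.sqrt u - Real.sqrt v), sq_nonneg (Real.sqrt u + Real.sqrt v),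
    mul_nonneg (sq_nonneg (Real.sqrt u - Real.sqrt v)) (sq_nonneg (Real.sqrt u + Real.sqrt v))]

private lemma klsi_sum_mul_le {ι : Type*} [Fintype ι] (a b : ι → ℝ) :
    ∑ i, a i * b i ≤ Real.sqrt (∑ i, a i ^ 2) * Real.sqrt (∑ i, b i ^ 2) := by
  have h := Finset.sum_mul_sq_le_sq_mul_sq Finset.univ a b
  calc ∑ i, a i * b i ≤ |∑ i, a i * b i| := le_abs_self _
    _ = Real.sqrt ((∑ i, a i * b i) ^ 2) := (Real.sqrt_sq_eq_abs _).symm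
    _ ≤ Real.sqrt ((∑ i, a i ^ 2) * ∑ i, b i ^ 2) := Real.sqrt_le_sqrt h
    _ = _ := Real.sqrt_mul (by positivity) _

private lemma klsi_L2_triangle {ι : Type*} [Fintype ι] (a b : ι → ℝ) :
    Real.sqrt (∑ i, (a i + b i) ^ 2)
      ≤ Real.sqrt (∑ i, a i ^ 2) + Real.sqrt (∑ i, b i ^ 2) := by
  have hab := klsi_sum_mul_le a b
  have ha : Real.sqrt (∑ i, a i ^ 2) ^ 2 = ∑ i, a i ^ 2 := Real.sq_sqrt (by positivity)
  have hb : Real.sqrt (∑ i, b i ^ 2) ^ 2 = ∑ i, b i ^ 2 := Real.sq_sqrt (by positivity)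
  have key : ∑ i, (a i + b i) ^ 2
      ≤ (Real.sqrt (∑ i, a i ^ 2) + Real.sqrt (∑ i, b i ^ 2)) ^ 2 := by
    have e : ∑ i, (a i + b i) ^ 2 = ∑ i, a i ^ 2 + 2 * ∑ i, a i * b i + ∑ i, b i ^ 2 := by
      rw [Finset.mul_sum, ← Finset.sum_add_distrib, ← Finset.sum_add_distrib]
      exact Finset.sum_congr rfl fun i _ => by ring
    rw [e]; nlinarith [hab, ha, hb]
  calc Real.sqrt (∑ i, (a i + b i) ^ 2) ≤ Real.sqrt ((Real.sqrt (∑ i, a i ^ 2) + Real.sqrt (∑ i, b i ^ 2)) ^ 2) := Real.sqrt_le_sqrt key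
    _ = _ := by rw [Real.sqrt_sq (by positivity)]

private lemma klsi_cs {ι : Type*} [Fintype ι] (g h : ι → ℝ)
    (hg : ∀ i, 0 ≤ g i) (hh : ∀ i, 0 ≤ h i) :
    (Real.sqrt (∑ i, g i) - Real.sqrt (∑ i, h i)) ^ 2
      ≤ ∑ i, (Real.sqrt (g i) - Real.sqrt (h i)) ^ 2 := by
  have hG : (0:ℝ) ≤ ∑ i, g i := Finset.sum_nonneg fun i _ => hg i
  have hH : (0:ℝ) ≤ ∑ i, h i := Finset.sum_nonneg fun i _ => hh i
  have e : ∑ i, (Real.sqrt (g i) - Real.sqrt (h i)) ^ 2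
      = ∑ i, g i + ∑ i, h i - 2 * ∑ i, Real.sqrt (g i) * Real.sqrt (h i) := by
    rw [Finset.mul_sum, ← Finset.sum_add_distrib, ← Finset.sum_sub_distrib]
    refine Finset.sum_congr rfl fun i _ => ?_
    have := Real.sq_sqrt (hg i); have := Real.sq_sqrt (hh i)
    nlinarith
  have cs : ∑ i, Real.sqrt (g i) * Real.sqrt (h i)
      ≤ Real.sqrt (∑ i, g i) * Real.sqrt (∑ i, h i) := by
    have h2 := klsi_sum_mul_le (fun i => Real.sqrt (g i)) (fun i => Real.sqrt (h i))
    calc ∑ i, Real.sqrt (g i) * Real.sqrt (h i)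
        ≤ Real.sqrt (∑ i, Real.sqrt (g i) ^ 2) * Real.sqrt (∑ i, Real.sqrt (h i) ^ 2) := h2
      _ = Real.sqrt (∑ i, g i) * Real.sqrt (∑ i, h i) := by
          rw [Finset.sum_congr rfl fun i _ => Real.sq_sqrt (hg i),
            Finset.sum_congr rfl fun i _ => Real.sq_sqrt (hh i)]
  have := Real.sq_sqrt hG; have := Real.sq_sqrt hH
  rw [e]; nlinarith

private lemma klsi_mul_log_mul2 (c u : ℝ) (hc : 0 < c) (hu : 0 ≤ u) :
    u * Real.log (c * (u / 2)) = u * Real.log c + u * Real.log (u / 2) := by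
  rcases eq_or_lt_of_le hu with h | h
  · simp [← h]
  · rw [Real.log_mul (ne_of_gt hc) (by positivity : (u/2 : ℝ) ≠ 0)]; ring

/-- Log-Sobolev inequality on the hypercube (unnormalized sums, constant 1). -/
private lemma klsi_hypercube : ∀ (n : ℕ) (g : (Fin n → Bool) → ℝ), (∀ η, 0 ≤ g η) →
    (∑ η, g η * Real.log (g η))
        - (∑ η, g η) * Real.log (((2:ℝ) ^ n)⁻¹ * ∑ η, g η)
      ≤ ∑ i : Fin n, ∑ η,
          (Real.sqrt (g (Function.update η i (!η i))) - Real.sqrt (g η)) ^ 2 := by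
  intro n
  induction n with
  | zero =>
    intro g hg
    simp
  | succ n IH =>
    intro g hg
    have hf₀n : ∀ x : Fin n → Bool, 0 ≤ g (Fin.cons false x) := fun x => hg _
    have hf₁n : ∀ x : Fin n → Bool, 0 ≤ g (Fin.cons true x) := fun x => hg _
    have IH₀ : (∑ x : Fin n → Bool, g (Fin.cons false x) * Real.log (g (Fin.cons false x)))
        - (∑ x : Fin n → Bool, g (Fin.cons false x))
            * Real.log (((2:ℝ)^n)⁻¹ * ∑ x : Fin n → Bool, g (Fin.cons false x))
        ≤ ∑ i : Fin n, ∑ x : Fin n → Bool,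
            (Real.sqrt (g (Fin.cons false (Function.update x i (!x i))))
              - Real.sqrt (g (Fin.cons false x))) ^ 2 :=
      IH (fun x => g (Fin.cons false x)) hf₀n
    have IH₁ : (∑ x : Fin n → Bool, g (Fin.cons true x) * Real.log (g (Fin.cons true x)))
        - (∑ x : Fin n → Bool, g (Fin.cons true x))
            * Real.log (((2:ℝ)^n)⁻¹ * ∑ x : Fin n → Bool, g (Fin.cons true x))
        ≤ ∑ i : Fin n, ∑ x : Fin n → Bool,
            (Real.sqrt (g (Fin.cons true (Function.update x i (!x i))))
              - Real.sqrt (g (Fin.cons true x))) ^ 2 :=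
      IH (fun x => g (Fin.cons true x)) hf₁n
    have reindex : ∀ F : (Fin (n+1) → Bool) → ℝ,
        ∑ η, F η = (∑ x : Fin n → Bool, F (Fin.cons false x))
          + ∑ x : Fin n → Bool, F (Fin.cons true x) := by
      intro F
      rw [← Equiv.sum_comp (Fin.consEquiv (fun _ => Bool)) F, Fintype.sum_prod_type]
      simp [Fin.consEquiv, add_comm]
    have hS₀n : (0:ℝ) ≤ ∑ x : Fin n → Bool, g (Fin.cons false x) :=
      Finset.sum_nonneg fun x _ => hf₀n x
    have hS₁n : (0:ℝ) ≤ ∑ x : Fin n → Bool, g (Fin.cons true x) :=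
      Finset.sum_nonneg fun x _ => hf₁n x
    have hc : (0:ℝ) < ((2:ℝ) ^ n)⁻¹ := by positivity
    have tp : (∑ x : Fin n → Bool, g (Fin.cons false x))
            * Real.log (((2:ℝ)^n)⁻¹ * ∑ x : Fin n → Bool, g (Fin.cons false x))
        + (∑ x : Fin n → Bool, g (Fin.cons true x))
            * Real.log (((2:ℝ)^n)⁻¹ * ∑ x : Fin n → Bool, g (Fin.cons true x))
        - ((∑ x : Fin n → Bool, g (Fin.cons false x)) + ∑ x : Fin n → Bool, g (Fin.cons true x))
            * Real.log (((2:ℝ)^(n+1))⁻¹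
              * ((∑ x : Fin n → Bool, g (Fin.cons false x)) + ∑ x : Fin n → Bool, g (Fin.cons true x)))
        ≤ 2 * (Real.sqrt (∑ x : Fin n → Bool, g (Fin.cons false x))
            - Real.sqrt (∑ x : Fin n → Bool, g (Fin.cons true x))) ^ 2 := by
      have e2 : ((2:ℝ)^(n+1))⁻¹
            * ((∑ x : Fin n → Bool, g (Fin.cons false x)) + ∑ x : Fin n → Bool, g (Fin.cons true x))
          = ((2:ℝ)^n)⁻¹
            * (((∑ x : Fin n → Bool, g (Fin.cons false x)) + ∑ x : Fin n → Bool, g (Fin.cons true x)) / 2) := by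
        rw [pow_succ]; ring
      rw [e2, klsi_mul_log_mul _ _ hc hS₀n, klsi_mul_log_mul _ _ hc hS₁n,
        klsi_mul_log_mul2 _ _ hc (by positivity)]
      have := klsi_two_point _ _ hS₀n hS₁n
      linarith
    have cs : (Real.sqrt (∑ x : Fin n → Bool, g (Fin.cons false x))
          - Real.sqrt (∑ x : Fin n → Bool, g (Fin.cons true x))) ^ 2
        ≤ ∑ x : Fin n → Bool,
            (Real.sqrt (g (Fin.cons false x)) - Real.sqrt (g (Fin.cons true x))) ^ 2 :=
      klsi_cs (fun x => g (Fin.cons false x)) (fun x => g (Fin.cons true x)) hf₀n hf₁n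
    -- flip at coordinate 0
    have e0 : ∀ (b : Bool) (x : Fin n → Bool),
        Function.update (Fin.cons b x : Fin (n+1) → Bool) 0
            (!(Fin.cons b x : Fin (n+1) → Bool) 0) = (Fin.cons (!b) x : Fin (n+1) → Bool) := by
      intro b x
      rw [Fin.update_cons_zero]
      simp
    have flip0 : ∑ η : Fin (n+1) → Bool,
        (Real.sqrt (g (Function.update η 0 (!η 0))) - Real.sqrt (g η)) ^ 2
        = 2 * ∑ x : Fin n → Bool,
            (Real.sqrt (g (Fin.cons false x)) - Real.sqrt (g (Fin.cons true x))) ^ 2 := by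
      rw [reindex (fun η => (Real.sqrt (g (Function.update η 0 (!η 0))) - Real.sqrt (g η)) ^ 2)]
      have t0 : ∀ x : Fin n → Bool,
          Function.update (Fin.cons false x : Fin (n+1) → Bool) 0
            (!(Fin.cons false x : Fin (n+1) → Bool) 0) = (Fin.cons true x : Fin (n+1) → Bool) := by
        intro x; rw [e0]; norm_num
      have t1 : ∀ x : Fin n → Bool,
          Function.update (Fin.cons true x : Fin (n+1) → Bool) 0
            (!(Fin.cons true x : Fin (n+1) → Bool) 0) = (Fin.cons false x : Fin (n+1) → Bool) := by
        intro x; rw [e0]; norm_num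
      simp only [t0, t1]
      have swap_sq : ∑ x : Fin n → Bool,
          (Real.sqrt (g (Fin.cons true x)) - Real.sqrt (g (Fin.cons false x))) ^ 2
          = ∑ x : Fin n → Bool,
            (Real.sqrt (g (Fin.cons false x)) - Real.sqrt (g (Fin.cons true x))) ^ 2 :=
        Finset.sum_congr rfl fun x _ => by ring
      rw [swap_sq]; ring
    -- flips at successor coordinates
    have key : ∀ (b : Bool) (x : Fin n → Bool) (i : Fin n),
        Function.update (Fin.cons b x : Fin (n+1) → Bool) i.succ
            (!(Fin.cons b x : Fin (n+1) → Bool) i.succ)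
          = (Fin.cons b (Function.update x i (!x i)) : Fin (n+1) → Bool) := by
      intro b x i
      have h1 : (Fin.cons b x : Fin (n+1) → Bool) i.succ = x i := by
        simp [Fin.cons_succ]
      rw [h1, ← Fin.cons_update]
    have flipsucc : ∀ i : Fin n, ∑ η : Fin (n+1) → Bool,
        (Real.sqrt (g (Function.update η i.succ (!η i.succ))) - Real.sqrt (g η)) ^ 2
        = (∑ x : Fin n → Bool,
            (Real.sqrt (g (Fin.cons false (Function.update x i (!x i))))
              - Real.sqrt (g (Fin.cons false x))) ^ 2)
          + ∑ x : Fin n → Bool,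
            (Real.sqrt (g (Fin.cons true (Function.update x i (!x i))))
              - Real.sqrt (g (Fin.cons true x))) ^ 2 := by
      intro i
      rw [reindex (fun η =>
        (Real.sqrt (g (Function.update η i.succ (!η i.succ))) - Real.sqrt (g η)) ^ 2)]
      simp only [key]
    -- assemble
    have eg : ∑ η, g η = (∑ x : Fin n → Bool, g (Fin.cons false x))
        + ∑ x : Fin n → Bool, g (Fin.cons true x) := reindex g
    have egl : ∑ η, g η * Real.log (g η)
        = (∑ x : Fin n → Bool, g (Fin.cons false x) * Real.log (g (Fin.cons false x)))
          + ∑ x : Fin n → Bool, g (Fin.cons true x) * Real.log (g (Fin.cons true x)) :=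
      reindex (fun η => g η * Real.log (g η))
    have esum : ∑ i : Fin (n+1), ∑ η : Fin (n+1) → Bool,
        (Real.sqrt (g (Function.update η i (!η i))) - Real.sqrt (g η)) ^ 2
        = (∑ η : Fin (n+1) → Bool,
            (Real.sqrt (g (Function.update η 0 (!η 0))) - Real.sqrt (g η)) ^ 2)
          + ∑ i : Fin n, ∑ η : Fin (n+1) → Bool,
            (Real.sqrt (g (Function.update η i.succ (!η i.succ))) - Real.sqrt (g η)) ^ 2 :=
      Fin.sum_univ_succ _
    rw [egl, eg, esum, flip0]
    have sumsucc : ∑ i : Fin n, ∑ η : Fin (n+1) → Bool,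
        (Real.sqrt (g (Function.update η i.succ (!η i.succ))) - Real.sqrt (g η)) ^ 2
        = (∑ i : Fin n, ∑ x : Fin n → Bool,
            (Real.sqrt (g (Fin.cons false (Function.update x i (!x i))))
              - Real.sqrt (g (Fin.cons false x))) ^ 2)
          + ∑ i : Fin n, ∑ x : Fin n → Bool,
            (Real.sqrt (g (Fin.cons true (Function.update x i (!x i))))
              - Real.sqrt (g (Fin.cons true x))) ^ 2 := by
      rw [← Finset.sum_add_distrib]
      exact Finset.sum_congr rfl fun i _ => flipsucc i
    rw [sumsucc]
    linarith

section Moves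

variable {L : ℕ} (f : (Fin L → Bool) → ℝ)

private noncomputable def klsiD (f : (Fin L → Bool) → ℝ) (T : (Fin L → Bool) → (Fin L → Bool)) : ℝ :=
  ∑ η, (Real.sqrt (f (T η)) - Real.sqrt (f η)) ^ 2

private lemma klsiD_nonneg (T : (Fin L → Bool) → (Fin L → Bool)) : 0 ≤ klsiD f T :=
  Finset.sum_nonneg fun _ _ => sq_nonneg _

/-- Key comparison step: conjugating a move by an involution. -/
private lemma klsi_step (s T : (Fin L → Bool) → (Fin L → Bool))
    (hs : Function.Involutive s) (hT : Function.Bijective T) :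
    Real.sqrt (klsiD f (fun η => s (T (s η))))
      ≤ Real.sqrt (klsiD f T) + 2 * Real.sqrt (klsiD f s) := by
  set A : (Fin L → Bool) → ℝ := fun η => Real.sqrt (f (s (T (s η)))) - Real.sqrt (f (T (s η)))
  set B : (Fin L → Bool) → ℝ := fun η => Real.sqrt (f (T (s η))) - Real.sqrt (f (s η))
  set C : (Fin L → Bool) → ℝ := fun η => Real.sqrt (f (s η)) - Real.sqrt (f η)
  have hA : ∑ η, A η ^ 2 = klsiD f s := by
    have := Function.Bijective.sum_comp (hT.comp hs.bijective)
      (fun ζ => (Real.sqrt (f (s ζ)) - Real.sqrt (f ζ)) ^ 2)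
    simpa [A, Function.comp, klsiD] using this
  have hB : ∑ η, B η ^ 2 = klsiD f T := by
    have := Function.Bijective.sum_comp hs.bijective
      (fun ζ => (Real.sqrt (f (T ζ)) - Real.sqrt (f ζ)) ^ 2)
    simpa [B, Function.comp, klsiD] using this
  have hC : ∑ η, C η ^ 2 = klsiD f s := by
    simp [C, klsiD]
  have e : klsiD f (fun η => s (T (s η))) = ∑ η, (A η + (B η + C η)) ^ 2 := by
    refine Finset.sum_congr rfl fun η _ => ?_
    simp only [A, B, C]; ring
  calc Real.sqrt (klsiD f (fun η => s (T (s η))))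
      = Real.sqrt (∑ η, (A η + (B η + C η)) ^ 2) := by rw [e]
    _ ≤ Real.sqrt (∑ η, A η ^ 2) + Real.sqrt (∑ η, (B η + C η) ^ 2) :=
        klsi_L2_triangle A (fun η => B η + C η)
    _ ≤ Real.sqrt (∑ η, A η ^ 2)
        + (Real.sqrt (∑ η, B η ^ 2) + Real.sqrt (∑ η, C η ^ 2)) := by
        have := klsi_L2_triangle B C
        linarith
    _ = Real.sqrt (klsiD f T) + 2 * Real.sqrt (klsiD f s) := by
        rw [hA, hB, hC]; ring

/-- the flip move at site `i` -/
private def klsiFl (L : ℕ) (i : ℕ) (hi : i < L) : (Fin L → Bool) → (Fin L → Bool) :=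
  fun η => Function.update η ⟨i, hi⟩ (!η ⟨i, hi⟩)

/-- the swap move at sites `y, y+1` (identity if out of range) -/
private def klsiSw (L : ℕ) (y : ℕ) : (Fin L → Bool) → (Fin L → Bool) :=
  fun η => if h : y + 1 < L then η ∘ Equiv.swap ⟨y, by omega⟩ ⟨y + 1, h⟩ else η

private lemma klsiFl_inv (i : ℕ) (hi : i < L) : Function.Involutive (klsiFl L i hi) := by
  intro η
  simp [klsiFl, Function.update_idem]

private lemma klsiSw_inv (y : ℕ) : Function.Involutive (klsiSw L y) := by
  intro η
  unfold klsiSw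
  by_cases h : y + 1 < L
  · simp only [dif_pos h]
    funext x
    simp [Equiv.swap_apply_self]
  · simp only [dif_neg h]

/-- recursion: flip at `i+1` is the swap-conjugate of flip at `i`. -/
private lemma klsiFl_rec (i : ℕ) (hi : i + 1 < L) :
    klsiFl L (i+1) hi = fun η => klsiSw L i (klsiFl L i (by omega) (klsiSw L i η)) := by
  funext η
  funext x
  have hy : i + 1 < L := hi
  simp only [klsiFl, klsiSw, dif_pos hy]
  set a : Fin L := ⟨i, by omega⟩
  set b : Fin L := ⟨i + 1, hy⟩
  have hab : a ≠ b := by simp [a, b, Fin.ext_iff]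
  -- RHS at x is: (update (η ∘ swap a b) a (!(η ∘ swap a b) a)) (swap a b x)
  have hval : (η ∘ Equiv.swap a b) a = η b := by
    simp [Equiv.swap_apply_left]
  by_cases hx : x = b
  · subst hx
    simp only [Function.update_self, Function.comp_apply, Equiv.swap_apply_right,
      Equiv.swap_apply_left, Bool.not_not]
  · rw [Function.update_of_ne hx]
    have hxa : Equiv.swap a b x ≠ a := by
      intro hcon
      apply hx
      have := congrArg (Equiv.swap a b) hcon
      rwa [Equiv.swap_apply_self, Equiv.swap_apply_left] at this
    simp only [Function.comp_apply]
    rw [Function.update_of_ne hxa]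
    simp [Equiv.swap_apply_self]

end Moves

private lemma klsi_chain {L : ℕ} (f : (Fin L → Bool) → ℝ) (hL : 1 ≤ L) :
    ∀ i (hi : i < L), Real.sqrt (klsiD f (klsiFl L i hi))
      ≤ Real.sqrt (klsiD f (klsiFl L 0 hL))
        + 2 * ∑ y ∈ Finset.range i, Real.sqrt (klsiD f (klsiSw L y)) := by
  intro i
  induction i with
  | zero =>
    intro hi
    simp
  | succ i IH =>
    intro hi
    have hi' : i < L := by omega
    rw [klsiFl_rec i hi]
    have step := klsi_step f (klsiSw L i) (klsiFl L i hi')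
      (klsiSw_inv i) (klsiFl_inv i hi').bijective
    refine step.trans ?_
    have := IH hi'
    rw [Finset.sum_range_succ]
    linarith [Real.sqrt_nonneg (klsiD f (klsiSw L i))]

private lemma klsi_flip_bound {L : ℕ} (f : (Fin L → Bool) → ℝ) (hL : 1 ≤ L)
    (i : ℕ) (hi : i < L) :
    klsiD f (klsiFl L i hi)
      ≤ 8 * (L : ℝ) * ((∑ y ∈ Finset.range (L-1), klsiD f (klsiSw L y))
          + klsiD f (klsiFl L 0 hL)) := by
  set a : ℝ := Real.sqrt (klsiD f (klsiFl L 0 hL)) with ha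
  set b : ℝ := ∑ y ∈ Finset.range (L-1), Real.sqrt (klsiD f (klsiSw L y)) with hb
  have hchain := klsi_chain f hL i hi
  have hsub : ∑ y ∈ Finset.range i, Real.sqrt (klsiD f (klsiSw L y)) ≤ b := by
    refine Finset.sum_le_sum_of_subset_of_nonneg ?_ fun y _ _ => Real.sqrt_nonneg _
    exact Finset.range_subset_range.2 (by omega)
  have h1 : Real.sqrt (klsiD f (klsiFl L i hi)) ≤ a + 2 * b := by linarith
  have hDnn := klsiD_nonneg f (klsiFl L i hi)
  have hD : klsiD f (klsiFl L i hi) = Real.sqrt (klsiD f (klsiFl L i hi)) ^ 2 :=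
    (Real.sq_sqrt hDnn).symm
  have ha2 : a ^ 2 = klsiD f (klsiFl L 0 hL) := Real.sq_sqrt (klsiD_nonneg f _)
  have hb2 : b ^ 2 ≤ ((L:ℝ) - 1) * ∑ y ∈ Finset.range (L-1), klsiD f (klsiSw L y) := by
    have := klsi_sq_sum_le (Finset.range (L-1))
      (fun y => Real.sqrt (klsiD f (klsiSw L y)))
    rw [Finset.card_range] at this
    have hcast : ((L - 1 : ℕ) : ℝ) = (L : ℝ) - 1 := by
      have : (1:ℕ) ≤ L := hL
      push_cast [Nat.cast_sub this]
      ring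
    have heq : ∑ y ∈ Finset.range (L-1), Real.sqrt (klsiD f (klsiSw L y)) ^ 2
        = ∑ y ∈ Finset.range (L-1), klsiD f (klsiSw L y) :=
      Finset.sum_congr rfl fun y _ => Real.sq_sqrt (klsiD_nonneg f _)
    rw [hcast, heq] at this
    exact this
  have hbnn : 0 ≤ b := Finset.sum_nonneg fun y _ => Real.sqrt_nonneg _
  have hann : 0 ≤ a := Real.sqrt_nonneg _
  have hLs : (1:ℝ) ≤ (L:ℝ) := by exact_mod_cast hL
  have hSnn : 0 ≤ ∑ y ∈ Finset.range (L-1), klsiD f (klsiSw L y) :=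
    Finset.sum_nonneg fun y _ => klsiD_nonneg f _
  have hfl0 : 0 ≤ klsiD f (klsiFl L 0 hL) := klsiD_nonneg f _
  have hsq : Real.sqrt (klsiD f (klsiFl L i hi)) ^ 2 ≤ (a + 2*b)^2 := by
    have := Real.sqrt_nonneg (klsiD f (klsiFl L i hi))
    nlinarith
  have hexp : (a + 2*b)^2 ≤ 2*a^2 + 8*b^2 := by nlinarith [sq_nonneg (a - 2*b)]
  have h8 : ((L:ℝ) - 1) * (∑ y ∈ Finset.range (L-1), klsiD f (klsiSw L y))
      ≤ (L:ℝ) * ∑ y ∈ Finset.range (L-1), klsiD f (klsiSw L y) :=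
    mul_le_mul_of_nonneg_right (by linarith) hSnn
  have h9 : klsiD f (klsiFl L 0 hL) ≤ (L:ℝ) * klsiD f (klsiFl L 0 hL) :=
    le_mul_of_one_le_left hfl0 hLs
  have hLD : 0 ≤ (L:ℝ) * klsiD f (klsiFl L 0 hL) := by positivity
  linarith


open scoped BigOperators

/-- Logarithmic Sobolev inequality for the Kawasaki (nearest-neighbor swap) dynamic
together with a single Glauber flip at site `1`, on the hypercube
`Ω = {−1,1}^{{1,…,L}}` (encoded as `Fin L → Bool`) with the uniform measure: there is
a universal constant `C` with `H(f) ≤ C·L²·D(f)` for every probability density `f`. -/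
theorem kawasaki_boundary_glauber_log_sobolev :
    ∃ C : ℝ, 0 < C ∧
      ∀ (L : ℕ) (hL : 1 ≤ L) (f : (Fin L → Bool) → ℝ),
        (∀ η, 0 ≤ f η) →
        ((2 : ℝ) ^ L)⁻¹ * (∑ η : Fin L → Bool, f η) = 1 →
        ((2 : ℝ) ^ L)⁻¹ * (∑ η : Fin L → Bool, f η * Real.log (f η)) ≤
          C * (L : ℝ) ^ 2 *
            ((∑ y : Fin (L - 1),
                ((2 : ℝ) ^ L)⁻¹ *
                  ∑ η : Fin L → Bool,
                    (Real.sqrt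
                        (f (η ∘ Equiv.swap
                          ⟨(y : ℕ), by have := y.isLt; omega⟩
                          ⟨(y : ℕ) + 1, by have := y.isLt; omega⟩)) -
                      Real.sqrt (f η)) ^ 2) +
              ((2 : ℝ) ^ L)⁻¹ *
                ∑ η : Fin L → Bool,
                  (Real.sqrt (f (Function.update η ⟨0, hL⟩ (!η ⟨0, hL⟩))) -
                    Real.sqrt (f η)) ^ 2) := by
  refine ⟨8, by norm_num, ?_⟩
  intro L hL f hpos hmean
  -- entropy bound from the hypercube LSI
  have hlog : Real.log (((2:ℝ) ^ L)⁻¹ * ∑ η, f η) = 0 := by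
    rw [hmean]; exact Real.log_one
  have hlsi := klsi_hypercube L f hpos
  rw [hlog, mul_zero, sub_zero] at hlsi
  -- identify the flip Dirichlet forms
  have hflip : ∀ i : Fin L,
      (∑ η : Fin L → Bool,
        (Real.sqrt (f (Function.update η i (!η i))) - Real.sqrt (f η)) ^ 2)
      = klsiD f (klsiFl L i.val i.isLt) := fun i => rfl
  set Draw : ℝ := (∑ y ∈ Finset.range (L-1), klsiD f (klsiSw L y))
      + klsiD f (klsiFl L 0 hL) with hDraw
  have hbound : ∀ i : Fin L, klsiD f (klsiFl L i.val i.isLt) ≤ 8 * (L:ℝ) * Draw :=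
    fun i => klsi_flip_bound f hL i.val i.isLt
  have hsum : (∑ i : Fin L, ∑ η : Fin L → Bool,
      (Real.sqrt (f (Function.update η i (!η i))) - Real.sqrt (f η)) ^ 2)
      ≤ (L:ℝ) * (8 * (L:ℝ) * Draw) := by
    calc (∑ i : Fin L, ∑ η : Fin L → Bool,
        (Real.sqrt (f (Function.update η i (!η i))) - Real.sqrt (f η)) ^ 2)
        = ∑ i : Fin L, klsiD f (klsiFl L i.val i.isLt) :=
          Finset.sum_congr rfl fun i _ => hflip i
      _ ≤ ∑ _i : Fin L, 8 * (L:ℝ) * Draw :=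
          Finset.sum_le_sum fun i _ => hbound i
      _ = (L:ℝ) * (8 * (L:ℝ) * Draw) := by
          rw [Finset.sum_const]
          simp [nsmul_eq_mul]
  have hent : (∑ η : Fin L → Bool, f η * Real.log (f η)) ≤ (L:ℝ) * (8 * (L:ℝ) * Draw) :=
    hlsi.trans hsum
  -- identify the swap Dirichlet forms in the statement
  have hsw : ∀ y : Fin (L-1),
      (∑ η : Fin L → Bool,
        (Real.sqrt (f (η ∘ Equiv.swap
          (⟨(y : ℕ), by have := y.isLt; omega⟩ : Fin L)
          (⟨(y : ℕ) + 1, by have := y.isLt; omega⟩ : Fin L))) -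
          Real.sqrt (f η)) ^ 2)
      = klsiD f (klsiSw L (y : ℕ)) := by
    intro y
    have hy : (y:ℕ) + 1 < L := by have := y.isLt; omega
    unfold klsiD klsiSw
    simp only [dif_pos hy]
  have hfin : (∑ y : Fin (L-1), klsiD f (klsiSw L (y:ℕ)))
      = ∑ y ∈ Finset.range (L-1), klsiD f (klsiSw L y) :=
    (Finset.sum_range fun y => klsiD f (klsiSw L y)).symm
  have hfl0 : (∑ η : Fin L → Bool,
      (Real.sqrt (f (Function.update η ⟨0, hL⟩ (!η ⟨0, hL⟩))) - Real.sqrt (f η)) ^ 2)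
      = klsiD f (klsiFl L 0 hL) := rfl
  have hinv : (0:ℝ) ≤ ((2:ℝ) ^ L)⁻¹ := by positivity
  calc ((2 : ℝ) ^ L)⁻¹ * (∑ η : Fin L → Bool, f η * Real.log (f η))
      ≤ ((2 : ℝ) ^ L)⁻¹ * ((L:ℝ) * (8 * (L:ℝ) * Draw)) :=
        mul_le_mul_of_nonneg_left hent hinv
    _ = 8 * (L : ℝ) ^ 2 * ((∑ y : Fin (L-1), ((2:ℝ) ^ L)⁻¹ * klsiD f (klsiSw L (y:ℕ)))
          + ((2:ℝ) ^ L)⁻¹ * klsiD f (klsiFl L 0 hL)) := by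
        conv_rhs => rw [← Finset.mul_sum]
        rw [hDraw, ← hfin]
        ring
    _ = _ := by
        simp only [hsw, hfl0]
end

section
/- There is a constant C depending only on m, c, C₀ such that for all 0 ≤ S < T and all x, y ∈ ℤ: | (N²/2)·Σ_{k=1}^m α̃_k·(G_{S,T,x+k,y} + G_{S,T,x−k,y} − 2G_{S,T,x,y}) − (N²/2)·(Σ_{k=1}^m k²α̃_k)·(G_{S,T,x+1,y} + G_{S,T,x−1,y} − 2G_{S,T,x,y}) | ≤ C·(Σ_{k=1}^m k⁴·α̃_k)·N^{−2}·(T−S)^{−2}. -/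
open scoped BigOperators

/-- The full-line heat kernel on `ℤ`:
`G_{S,T,x,y} = (1/2π)∫_{−π}^{π} e^{−i(x−y)ξ} exp(−N²(T−S)·Σ_k α̃_k(1 − cos kξ)) dξ`,
the heat kernel of `(N²/2)·Σ_k α̃_k Δ_k`. -/
noncomputable def Gker (N m : ℕ) (α : ℕ → ℝ) (S T : ℝ) (x y : ℤ) : ℝ :=
  (1 / (2 * Real.pi)) *
    (∫ ξ in (-Real.pi)..Real.pi,
      Complex.exp (-Complex.I * (((x : ℤ) - y : ℤ) : ℂ) * (ξ : ℂ)) *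
        ((Real.exp (-(N : ℝ) ^ 2 * (T - S) *
          ∑ k ∈ Finset.Icc 1 m, α k * (1 - Real.cos ((k : ℝ) * ξ))) : ℝ) : ℂ)).re


open Real MeasureTheory intervalIntegral

theorem sin_sub_self_abs (t : ℝ) : |Real.sin t - t| ≤ 2 * |t|^3 := by
  rcases le_or_gt (|t|) 1 with h | h
  · have hb := Real.sin_bound h
    have h2 : |Real.sin t - t| ≤ |Real.sin t - (t - t^3/6)| + |t^3/6| := by
      calc |Real.sin t - t| = |(Real.sin t - (t - t^3/6)) + (-(t^3/6))| := by ring_nf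
        _ ≤ |Real.sin t - (t - t^3/6)| + |(-(t^3/6))| := abs_add_le _ _
        _ = |Real.sin t - (t - t^3/6)| + |t^3/6| := by rw [abs_neg]
    have h4 : |t|^4 ≤ |t|^3 := by
      nlinarith [abs_nonneg t, pow_nonneg (abs_nonneg t) 3]
    have h5 : |t^3/6| = |t|^3/6 := by rw [abs_div, abs_pow]; norm_num
    nlinarith [pow_nonneg (abs_nonneg t) 3, pow_le_pow_of_le_one (abs_nonneg t) h (by norm_num : 3 ≤ 5)]
  · have h1 : |Real.sin t| ≤ 1 := Real.abs_sin_le_one t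
    have h2 : |Real.sin t - t| ≤ |Real.sin t| + |t| := abs_sub _ _
    nlinarith [abs_nonneg t, pow_nonneg (abs_nonneg t) 2,
      pow_le_pow_left₀ (by norm_num : (0:ℝ) ≤ 1) h.le 3]

theorem key_trig (k : ℕ) (hk : 1 ≤ k) (ξ : ℝ) :
    |(1 - Real.cos ((k:ℝ) * ξ)) - (k:ℝ)^2 * (1 - Real.cos ξ)| ≤ (k:ℝ)^4 * ξ^4 := by
  set K : ℝ := (k:ℝ) with hK
  have hK1 : 1 ≤ K := by rw [hK]; exact_mod_cast hk
  have hKpos : 0 < K := by linarith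
  set s : ℝ := ξ/2 with hs
  have hcos1 : 1 - Real.cos ξ = 2 * Real.sin s ^ 2 := by
    have := Real.sin_sq_eq_half_sub s
    rw [hs] at this ⊢
    rw [this]; ring_nf
  have hcos2 : 1 - Real.cos (K * ξ) = 2 * Real.sin (K * s) ^ 2 := by
    have := Real.sin_sq_eq_half_sub (K * s)
    rw [this, hs]; ring_nf
  set u : ℝ := Real.sin (K * s)
  set v : ℝ := Real.sin s
  have h1 : |u - K * s| ≤ 2 * (K * |s|)^3 := by
    have := sin_sub_self_abs (K * s)
    rwa [abs_mul, abs_of_pos hKpos] at this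
  have h2 : |v - s| ≤ 2 * |s|^3 := sin_sub_self_abs s
  have hu : |u| ≤ K * |s| := by
    have := Real.abs_sin_le_abs (x := K * s)
    rwa [abs_mul, abs_of_pos hKpos] at this
  have hv : |v| ≤ |s| := Real.abs_sin_le_abs
  have hA : |u - K * v| ≤ 4 * K^3 * |s|^3 := by
    have : |u - K * v| ≤ |u - K * s| + K * |s - v| := by
      calc |u - K * v| = |(u - K * s) + K * (s - v)| := by ring_nf
        _ ≤ |u - K * s| + |K * (s - v)| := abs_add_le _ _
        _ = |u - K * s| + K * |s - v| := by rw [abs_mul, abs_of_pos hKpos]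
    have h2' : |s - v| ≤ 2 * |s|^3 := by rwa [abs_sub_comm] at h2
    have hK3 : K ≤ K^3 := by nlinarith [mul_nonneg (mul_nonneg hKpos.le (sub_nonneg.2 hK1)) (by linarith : (0:ℝ) ≤ K+1)]
    nlinarith [pow_nonneg (abs_nonneg s) 3]
  have hB : |u + K * v| ≤ 2 * K * |s| := by
    calc |u + K * v| ≤ |u| + |K * v| := abs_add_le _ _
      _ = |u| + K * |v| := by rw [abs_mul, abs_of_pos hKpos]
      _ ≤ 2 * K * |s| := by nlinarith
  have hfac : (1 - Real.cos (K * ξ)) - K^2 * (1 - Real.cos ξ) = 2 * (u - K*v) * (u + K*v) := by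
    rw [hcos1, hcos2]; ring
  rw [hfac, abs_mul, abs_mul, abs_two]
  calc 2 * |u - K*v| * |u + K*v| ≤ 2 * (4 * K^3 * |s|^3) * (2 * K * |s|) := by
        apply mul_le_mul _ hB (abs_nonneg _) (by positivity)
        apply mul_le_mul_of_nonneg_left hA (by norm_num)
    _ = K^4 * ξ^4 := by
        have habs : |ξ|^4 = ξ^4 := by rw [← abs_pow, abs_of_nonneg (by positivity)]
        rw [hs, show |ξ/2| = |ξ|/2 by rw [abs_div]; norm_num]
        calc 2 * (4 * K^3 * (|ξ|/2)^3) * (2 * K * (|ξ|/2)) = K^4 * |ξ|^4 := by ring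
          _ = K^4 * ξ^4 := by rw [habs]


noncomputable def fker (N m : ℕ) (α : ℕ → ℝ) (S T : ℝ) (ξ : ℝ) : ℝ :=
  Real.exp (-(N : ℝ) ^ 2 * (T - S) * ∑ k ∈ Finset.Icc 1 m, α k * (1 - Real.cos ((k : ℝ) * ξ)))

theorem fker_cont (N m : ℕ) (α : ℕ → ℝ) (S T : ℝ) : Continuous (fker N m α S T) := by
  apply Real.continuous_exp.comp
  apply continuous_const.mul
  apply continuous_finset_sum
  intro k _
  exact continuous_const.mul (continuous_const.sub (Real.continuous_cos.comp (continuous_const.mul continuous_id)))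

noncomputable def gker (N m : ℕ) (α : ℕ → ℝ) (S T : ℝ) (b : ℝ) : ℝ :=
  ∫ ξ in (-Real.pi)..Real.pi, Real.cos (b * ξ) * fker N m α S T ξ

theorem gker_int (N m : ℕ) (α : ℕ → ℝ) (S T b : ℝ) :
    IntervalIntegrable (fun ξ => Real.cos (b * ξ) * fker N m α S T ξ)
      MeasureTheory.volume (-Real.pi) Real.pi := by
  apply Continuous.intervalIntegrable
  exact (Real.continuous_cos.comp (continuous_const.mul continuous_id)).mul (fker_cont N m α S T)

theorem gker_comb (N m : ℕ) (α : ℕ → ℝ) (S T b K : ℝ) :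
    gker N m α S T (b + K) + gker N m α S T (b - K) - 2 * gker N m α S T b =
      ∫ ξ in (-Real.pi)..Real.pi,
        (2 * Real.cos (b * ξ) * (Real.cos (K * ξ) - 1)) * fker N m α S T ξ := by
  have hEq : Set.EqOn
      (fun ξ => (2 * Real.cos (b * ξ) * (Real.cos (K * ξ) - 1)) * fker N m α S T ξ)
      (fun ξ => (Real.cos ((b + K) * ξ) * fker N m α S T ξ +
        Real.cos ((b - K) * ξ) * fker N m α S T ξ) -
        2 * (Real.cos (b * ξ) * fker N m α S T ξ))
      (Set.uIcc (-Real.pi) Real.pi) := by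
    intro ξ _
    have hc1 : Real.cos ((b + K) * ξ) =
        Real.cos (b * ξ) * Real.cos (K * ξ) - Real.sin (b * ξ) * Real.sin (K * ξ) := by
      rw [add_mul, Real.cos_add]
    have hc2 : Real.cos ((b - K) * ξ) =
        Real.cos (b * ξ) * Real.cos (K * ξ) + Real.sin (b * ξ) * Real.sin (K * ξ) := by
      rw [sub_mul, Real.cos_sub]
    simp only [hc1, hc2]
    ring
  rw [intervalIntegral.integral_congr hEq,
    intervalIntegral.integral_sub ((gker_int N m α S T (b + K)).add (gker_int N m α S T (b - K)))
      ((gker_int N m α S T b).const_mul 2),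
    intervalIntegral.integral_add (gker_int N m α S T (b + K)) (gker_int N m α S T (b - K)),
    intervalIntegral.integral_const_mul]
  rfl

theorem Gker_eq' (N m : ℕ) (α : ℕ → ℝ) (S T : ℝ) (x y : ℤ) :
    Gker N m α S T x y = (1 / (2 * Real.pi)) * gker N m α S T (((x - y : ℤ) : ℝ)) := by
  unfold Gker gker fker
  congr 1
  have hle : -Real.pi ≤ Real.pi := by linarith [Real.pi_pos]
  rw [intervalIntegral.integral_of_le hle, intervalIntegral.integral_of_le hle]
  have hcont : Continuous fun ξ : ℝ =>
      Complex.exp (-Complex.I * (((x : ℤ) - y : ℤ) : ℂ) * (ξ : ℂ)) *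
        ((Real.exp (-(N : ℝ) ^ 2 * (T - S) *
          ∑ k ∈ Finset.Icc 1 m, α k * (1 - Real.cos ((k : ℝ) * ξ))) : ℝ) : ℂ) := by
    apply Continuous.mul
    · exact Complex.continuous_exp.comp (continuous_const.mul Complex.continuous_ofReal)
    · exact Complex.continuous_ofReal.comp (fker_cont N m α S T)
  have hint : MeasureTheory.IntegrableOn (fun ξ : ℝ =>
      Complex.exp (-Complex.I * (((x : ℤ) - y : ℤ) : ℂ) * (ξ : ℂ)) *
        ((Real.exp (-(N : ℝ) ^ 2 * (T - S) *
          ∑ k ∈ Finset.Icc 1 m, α k * (1 - Real.cos ((k : ℝ) * ξ))) : ℝ) : ℂ))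
      (Set.Ioc (-Real.pi) Real.pi) := hcont.integrableOn_Ioc
  have hre : (∫ ξ in Set.Ioc (-Real.pi) Real.pi,
      Complex.exp (-Complex.I * (((x : ℤ) - y : ℤ) : ℂ) * (ξ : ℂ)) *
        ((Real.exp (-(N : ℝ) ^ 2 * (T - S) *
          ∑ k ∈ Finset.Icc 1 m, α k * (1 - Real.cos ((k : ℝ) * ξ))) : ℝ) : ℂ)).re =
      ∫ ξ in Set.Ioc (-Real.pi) Real.pi,
        (Complex.exp (-Complex.I * (((x : ℤ) - y : ℤ) : ℂ) * (ξ : ℂ)) *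
        ((Real.exp (-(N : ℝ) ^ 2 * (T - S) *
          ∑ k ∈ Finset.Icc 1 m, α k * (1 - Real.cos ((k : ℝ) * ξ))) : ℝ) : ℂ)).re :=
    (integral_re hint).symm
  rw [hre]
  apply MeasureTheory.integral_congr_ae
  filter_upwards with ξ
  have h1 : (-Complex.I * (((x : ℤ) - y : ℤ) : ℂ) * (ξ : ℂ)) =
      ((-(((x - y : ℤ):ℝ) * ξ) : ℝ) : ℂ) * Complex.I := by push_cast; ring
  rw [h1, Complex.mul_re, Complex.exp_ofReal_mul_I_re, Complex.ofReal_re,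
    Complex.ofReal_im, mul_zero, sub_zero, Real.cos_neg]

theorem comb_int (N m : ℕ) (α : ℕ → ℝ) (S T b K : ℝ) :
    IntervalIntegrable (fun ξ => (2 * Real.cos (b * ξ) * (Real.cos (K * ξ) - 1)) * fker N m α S T ξ)
      MeasureTheory.volume (-Real.pi) Real.pi := by
  apply Continuous.intervalIntegrable
  exact ((continuous_const.mul (Real.continuous_cos.comp (continuous_const.mul continuous_id))).mul
    ((Real.continuous_cos.comp (continuous_const.mul continuous_id)).sub continuous_const)).mul
    (fker_cont N m α S T)

theorem main_identity (N m : ℕ) (α : ℕ → ℝ) (S T : ℝ) (x y : ℤ) :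
    ((N : ℝ) ^ 2 / 2) *
        (∑ k ∈ Finset.Icc 1 m, α k *
          (Gker N m α S T (x + k) y + Gker N m α S T (x - k) y - 2 * Gker N m α S T x y)) -
      ((N : ℝ) ^ 2 / 2) * (∑ k ∈ Finset.Icc 1 m, (k : ℝ) ^ 2 * α k) *
        (Gker N m α S T (x + 1) y + Gker N m α S T (x - 1) y - 2 * Gker N m α S T x y) =
      (1 / (2 * Real.pi)) * ∫ ξ in (-Real.pi)..Real.pi,
        (N : ℝ) ^ 2 * Real.cos (((x - y : ℤ) : ℝ) * ξ) *
          (∑ k ∈ Finset.Icc 1 m, α k *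
            ((Real.cos ((k : ℝ) * ξ) - 1) - (k : ℝ) ^ 2 * (Real.cos ((1 : ℝ) * ξ) - 1))) *
          fker N m α S T ξ := by
  set a : ℝ := ((x - y : ℤ) : ℝ) with ha
  have h1 : ∀ K : ℝ, ∀ x' : ℤ, ((x' : ℝ) = (x : ℝ) + K) →
      Gker N m α S T x' y + Gker N m α S T (2*x - x') y - 2 * Gker N m α S T x y =
      (1 / (2 * Real.pi)) * ∫ ξ in (-Real.pi)..Real.pi,
        (2 * Real.cos (a * ξ) * (Real.cos (K * ξ) - 1)) * fker N m α S T ξ := by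
    intro K x' hx'
    rw [Gker_eq', Gker_eq', Gker_eq']
    have e1 : ((x' - y : ℤ) : ℝ) = a + K := by push_cast [ha] at hx' ⊢ ; linarith
    have e2 : ((2*x - x' - y : ℤ) : ℝ) = a - K := by push_cast [ha] at hx' ⊢ ; linarith
    rw [e1, e2, show (1 / (2 * Real.pi)) * gker N m α S T (a + K) +
        (1 / (2 * Real.pi)) * gker N m α S T (a - K) -
        2 * ((1 / (2 * Real.pi)) * gker N m α S T a) =
        (1 / (2 * Real.pi)) * (gker N m α S T (a + K) + gker N m α S T (a - K) -
          2 * gker N m α S T a) from by ring, gker_comb]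
  have hIk : ∀ K : ℝ, IntervalIntegrable
      (fun ξ => (2 * Real.cos (a * ξ) * (Real.cos (K * ξ) - 1)) * fker N m α S T ξ)
      MeasureTheory.volume (-Real.pi) Real.pi := fun K => comb_int N m α S T a K
  set I : ℝ → ℝ := fun K => ∫ ξ in (-Real.pi)..Real.pi,
      (2 * Real.cos (a * ξ) * (Real.cos (K * ξ) - 1)) * fker N m α S T ξ with hI
  have h1k : ∀ k : ℕ, Gker N m α S T (x + k) y + Gker N m α S T (x - k) y -
      2 * Gker N m α S T x y = (1 / (2 * Real.pi)) * I (k : ℝ) := by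
    intro k
    have := h1 (k : ℝ) (x + k) (by push_cast; ring)
    rw [show (2*x - (x + (k:ℤ))) = x - k from by ring] at this
    exact this
  have h11 : Gker N m α S T (x + 1) y + Gker N m α S T (x - 1) y -
      2 * Gker N m α S T x y = (1 / (2 * Real.pi)) * I 1 := by
    have := h1 1 (x + 1) (by push_cast; ring)
    rw [show (2*x - (x + 1)) = x - 1 from by ring] at this
    exact this
  have hLHS : ((N : ℝ) ^ 2 / 2) *
        (∑ k ∈ Finset.Icc 1 m, α k *
          (Gker N m α S T (x + k) y + Gker N m α S T (x - k) y - 2 * Gker N m α S T x y)) -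
      ((N : ℝ) ^ 2 / 2) * (∑ k ∈ Finset.Icc 1 m, (k : ℝ) ^ 2 * α k) *
        (Gker N m α S T (x + 1) y + Gker N m α S T (x - 1) y - 2 * Gker N m α S T x y) =
      (1 / (2 * Real.pi)) *
        (∑ k ∈ Finset.Icc 1 m,
          (((N : ℝ) ^ 2 / 2 * α k) * I (k : ℝ) - ((N : ℝ) ^ 2 / 2 * ((k : ℝ) ^ 2 * α k)) * I 1)) := by
    simp only [h1k, h11]
    simp only [Finset.mul_sum, Finset.sum_mul, mul_sub, Finset.sum_sub_distrib]
    congr 1 <;> exact Finset.sum_congr rfl fun k _ => by ring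
  rw [hLHS]
  congr 1
  have hterm : ∀ k ∈ Finset.Icc 1 m,
      ((N : ℝ) ^ 2 / 2 * α k) * I (k : ℝ) - ((N : ℝ) ^ 2 / 2 * ((k : ℝ) ^ 2 * α k)) * I 1 =
      ∫ ξ in (-Real.pi)..Real.pi,
        (((N : ℝ) ^ 2 / 2 * α k) * ((2 * Real.cos (a * ξ) * (Real.cos ((k:ℝ) * ξ) - 1)) * fker N m α S T ξ) -
         ((N : ℝ) ^ 2 / 2 * ((k : ℝ) ^ 2 * α k)) * ((2 * Real.cos (a * ξ) * (Real.cos ((1:ℝ) * ξ) - 1)) * fker N m α S T ξ)) := by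
    intro k _
    rw [hI]
    rw [← intervalIntegral.integral_const_mul, ← intervalIntegral.integral_const_mul,
      ← intervalIntegral.integral_sub ((hIk _).const_mul _) ((hIk _).const_mul _)]
  rw [Finset.sum_congr rfl hterm,
    ← intervalIntegral.integral_finset_sum (fun k _ => (((hIk _).const_mul _).sub ((hIk _).const_mul _)))]
  apply intervalIntegral.integral_congr
  intro ξ _
  simp only
  rw [show (N : ℝ) ^ 2 * Real.cos (a * ξ) *
      (∑ k ∈ Finset.Icc 1 m, α k *
        ((Real.cos ((k : ℝ) * ξ) - 1) - (k : ℝ) ^ 2 * (Real.cos ((1:ℝ) * ξ) - 1))) *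
      fker N m α S T ξ =
      ∑ k ∈ Finset.Icc 1 m, ((N : ℝ) ^ 2 * Real.cos (a * ξ) *
        (α k * ((Real.cos ((k : ℝ) * ξ) - 1) - (k : ℝ) ^ 2 * (Real.cos ((1:ℝ) * ξ) - 1))) *
        fker N m α S T ξ) from by rw [Finset.mul_sum, Finset.sum_mul]]
  exact Finset.sum_congr rfl fun k _ => by ring

set_option maxHeartbeats 1200000 in
/-- Comparison of the long-range generator with its nearest-neighbor homogenization on
the full-line heat kernel:
`|(N²/2)Σ_k α̃_k Δ_k G − (N²/2)(Σ_k k²α̃_k) Δ₁ G| ≤ C·(Σ_k k⁴α̃_k)·N^{−2}(T−S)^{−2}`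
with `C` depending only on `m, c, C₀`. -/
theorem full_line_kernel_generator_comparison
    (m : ℕ) (c C₀ : ℝ) (hm : 1 ≤ m) (hc : 0 < c) (hC₀ : 0 < C₀) :
    ∃ C : ℝ, 0 < C ∧
      ∀ (N : ℕ) (α : ℕ → ℝ), 1 ≤ N →
        (∀ k ∈ Finset.Icc 1 m, 0 ≤ α k) → c ≤ α 1 →
        (∑ k ∈ Finset.Icc 1 m, α k) ≤ C₀ →
        ∀ (S T : ℝ), 0 ≤ S → S < T → ∀ x y : ℤ,
          |((N : ℝ) ^ 2 / 2) *
              (∑ k ∈ Finset.Icc 1 m, α k *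
                (Gker N m α S T (x + k) y + Gker N m α S T (x - k) y -
                  2 * Gker N m α S T x y)) -
            ((N : ℝ) ^ 2 / 2) * (∑ k ∈ Finset.Icc 1 m, (k : ℝ) ^ 2 * α k) *
              (Gker N m α S T (x + 1) y + Gker N m α S T (x - 1) y -
                2 * Gker N m α S T x y)| ≤
          C * (∑ k ∈ Finset.Icc 1 m, (k : ℝ) ^ 4 * α k) * (N : ℝ) ^ (-(2 : ℝ)) *
            (T - S) ^ (-(2 : ℝ)) := by
  have hπ := Real.pi_pos
  refine ⟨Real.pi ^ 4 / c ^ 2, by positivity, ?_⟩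
  intro N α hN hα hα1 hsum S T hS hST x y
  rw [main_identity]
  set a : ℝ := ((x - y : ℤ) : ℝ) with ha
  have hNR : (1:ℝ) ≤ (N:ℝ) := by exact_mod_cast hN
  have hN2 : (0:ℝ) < (N:ℝ)^2 := by positivity
  have hTS : 0 < T - S := by linarith
  set lam : ℝ := 2 * c * (N:ℝ)^2 * (T - S) / Real.pi ^ 2 with hlam
  have hlampos : 0 < lam := by rw [hlam]; positivity
  set Sb : ℝ := ∑ k ∈ Finset.Icc 1 m, (k:ℝ)^4 * α k with hSb
  have hSbnn : 0 ≤ Sb := Finset.sum_nonneg fun k hk => by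
    have := hα k hk; positivity
  set M : ℝ := (N:ℝ)^2 * Sb * (4 / lam^2) with hM
  have hbound : ∀ ξ ∈ Set.uIoc (-Real.pi) Real.pi,
      ‖(N : ℝ) ^ 2 * Real.cos (a * ξ) *
          (∑ k ∈ Finset.Icc 1 m, α k *
            ((Real.cos ((k : ℝ) * ξ) - 1) - (k : ℝ) ^ 2 * (Real.cos ((1 : ℝ) * ξ) - 1))) *
          fker N m α S T ξ‖ ≤ M := by
    intro ξ hξ
    rw [Set.uIoc_of_le (by linarith : -Real.pi ≤ Real.pi)] at hξ
    have hξabs : |ξ| ≤ Real.pi := abs_le.2 ⟨hξ.1.le, hξ.2⟩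
    have hE : 0 < fker N m α S T ξ := Real.exp_pos _
    -- sum bound
    have hS1 : |∑ k ∈ Finset.Icc 1 m, α k *
        ((Real.cos ((k : ℝ) * ξ) - 1) - (k : ℝ) ^ 2 * (Real.cos ((1 : ℝ) * ξ) - 1))| ≤ Sb * ξ^4 := by
      calc |∑ k ∈ Finset.Icc 1 m, α k *
          ((Real.cos ((k : ℝ) * ξ) - 1) - (k : ℝ) ^ 2 * (Real.cos ((1 : ℝ) * ξ) - 1))|
          ≤ ∑ k ∈ Finset.Icc 1 m, |α k *
            ((Real.cos ((k : ℝ) * ξ) - 1) - (k : ℝ) ^ 2 * (Real.cos ((1 : ℝ) * ξ) - 1))| :=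
            Finset.abs_sum_le_sum_abs _ _
        _ ≤ ∑ k ∈ Finset.Icc 1 m, (k:ℝ)^4 * α k * ξ^4 := by
            apply Finset.sum_le_sum
            intro k hk
            have hk1 : 1 ≤ k := (Finset.mem_Icc.1 hk).1
            have hαk := hα k hk
            rw [abs_mul, abs_of_nonneg hαk, one_mul]
            have h2 : |(Real.cos ((k : ℝ) * ξ) - 1) - (k : ℝ) ^ 2 * (Real.cos ξ - 1)| ≤ (k:ℝ)^4 * ξ^4 := by
              have := key_trig k hk1 ξ
              rw [show (1 - Real.cos ((k:ℝ) * ξ)) - (k:ℝ)^2 * (1 - Real.cos ξ) =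
                -((Real.cos ((k : ℝ) * ξ) - 1) - (k : ℝ) ^ 2 * (Real.cos ξ - 1)) from by ring,
                abs_neg] at this
              exact this
            calc α k * |(Real.cos ((k : ℝ) * ξ) - 1) - (k : ℝ) ^ 2 * (Real.cos ξ - 1)|
                ≤ α k * ((k:ℝ)^4 * ξ^4) := by
                  exact mul_le_mul_of_nonneg_left h2 hαk
              _ = (k:ℝ)^4 * α k * ξ^4 := by ring
        _ = Sb * ξ^4 := by rw [hSb, Finset.sum_mul]
    -- exponential bound
    have hEb : fker N m α S T ξ ≤ Real.exp (-(lam * ξ^2)) := by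
      rw [fker]
      apply Real.exp_le_exp.2
      have hJ : 2 / Real.pi^2 * ξ^2 ≤ 1 - Real.cos ξ := by
        have := Real.cos_le_one_sub_mul_cos_sq hξabs
        linarith
      have honem : 1 ∈ Finset.Icc 1 m := Finset.mem_Icc.2 ⟨le_refl 1, hm⟩
      have hsingle : α 1 * (1 - Real.cos (((1:ℕ):ℝ) * ξ)) ≤
          ∑ k ∈ Finset.Icc 1 m, α k * (1 - Real.cos ((k : ℝ) * ξ)) := by
        apply Finset.single_le_sum (f := fun k => α k * (1 - Real.cos ((k : ℝ) * ξ))) _ honem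
        intro k hk
        have h1 := Real.cos_le_one ((k:ℝ) * ξ)
        have h2 := hα k hk
        nlinarith
      simp only [Nat.cast_one, one_mul] at hsingle
      have hlow : c * (2 / Real.pi^2 * ξ^2) ≤ α 1 * (1 - Real.cos ξ) := by
        have h0 : 0 ≤ 2 / Real.pi^2 * ξ^2 := by positivity
        have h1 : 0 ≤ 1 - Real.cos ξ := by linarith [Real.cos_le_one ξ]
        nlinarith
      have : lam * ξ^2 ≤ (N:ℝ)^2 * (T - S) * ∑ k ∈ Finset.Icc 1 m, α k * (1 - Real.cos ((k : ℝ) * ξ)) := by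
        have hmul : (N:ℝ)^2 * (T-S) * (c * (2 / Real.pi^2 * ξ^2)) ≤
            (N:ℝ)^2 * (T-S) * ∑ k ∈ Finset.Icc 1 m, α k * (1 - Real.cos ((k : ℝ) * ξ)) := by
          apply mul_le_mul_of_nonneg_left _ (by positivity)
          linarith
        calc lam * ξ^2 = (N:ℝ)^2 * (T-S) * (c * (2 / Real.pi^2 * ξ^2)) := by
              rw [hlam]; field_simp
          _ ≤ _ := hmul
      linarith
    -- quartic bound
    have hx4 : ξ^4 * Real.exp (-(lam * ξ^2)) ≤ 4 / lam^2 := by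
      have hu : 0 ≤ lam * ξ^2 := by positivity
      have h1 : lam * ξ^2 / 2 + 1 ≤ Real.exp (lam * ξ^2 / 2) := by
        have := Real.add_one_le_exp (lam * ξ^2 / 2); linarith
      have h2 : Real.exp (lam * ξ^2) = Real.exp (lam * ξ^2 / 2) * Real.exp (lam * ξ^2 / 2) := by
        rw [← Real.exp_add]; ring_nf
      have h3 : (lam * ξ^2)^2 / 4 ≤ Real.exp (lam * ξ^2) := by nlinarith
      rw [Real.exp_neg]
      rw [mul_inv_le_iff₀ (Real.exp_pos _)]
      have h4 : 0 < Real.exp (lam * ξ^2) := Real.exp_pos _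
      rw [div_mul_eq_mul_div, le_div_iff₀ (by positivity : (0:ℝ) < lam^2)]
      nlinarith
    -- assemble
    rw [Real.norm_eq_abs]
    calc |(N : ℝ) ^ 2 * Real.cos (a * ξ) *
          (∑ k ∈ Finset.Icc 1 m, α k *
            ((Real.cos ((k : ℝ) * ξ) - 1) - (k : ℝ) ^ 2 * (Real.cos ((1 : ℝ) * ξ) - 1))) *
          fker N m α S T ξ|
        = (N:ℝ)^2 * |Real.cos (a * ξ)| * |∑ k ∈ Finset.Icc 1 m, α k *
            ((Real.cos ((k : ℝ) * ξ) - 1) - (k : ℝ) ^ 2 * (Real.cos ((1 : ℝ) * ξ) - 1))| *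
            fker N m α S T ξ := by
          rw [abs_mul, abs_mul, abs_mul, abs_of_nonneg (by positivity : (0:ℝ) ≤ (N:ℝ)^2),
            abs_of_nonneg hE.le]
      _ ≤ (N:ℝ)^2 * 1 * (Sb * ξ^4) * Real.exp (-(lam * ξ^2)) := by
          gcongr <;> first
            | exact hSbnn
            | exact Real.abs_cos_le_one _
            | exact hS1
            | exact hEb
      _ = (N:ℝ)^2 * Sb * (ξ^4 * Real.exp (-(lam * ξ^2))) := by ring
      _ ≤ (N:ℝ)^2 * Sb * (4 / lam^2) := by gcongr
      _ = M := by rw [hM]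
  have hnorm := intervalIntegral.norm_integral_le_of_norm_le_const hbound
  rw [Real.norm_eq_abs] at hnorm
  have h2π : |Real.pi - (-Real.pi)| = 2 * Real.pi := by
    rw [abs_of_pos (by linarith)]; ring
  rw [h2π] at hnorm
  have hfinal : |(1 / (2 * Real.pi)) * ∫ ξ in (-Real.pi)..Real.pi,
      (N : ℝ) ^ 2 * Real.cos (a * ξ) *
          (∑ k ∈ Finset.Icc 1 m, α k *
            ((Real.cos ((k : ℝ) * ξ) - 1) - (k : ℝ) ^ 2 * (Real.cos ((1 : ℝ) * ξ) - 1))) *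
          fker N m α S T ξ| ≤ M := by
    rw [abs_mul, abs_of_pos (by positivity : (0:ℝ) < 1 / (2 * Real.pi))]
    have h := mul_le_mul_of_nonneg_left hnorm (by positivity : (0:ℝ) ≤ 1 / (2 * Real.pi))
    have he : 1 / (2 * Real.pi) * (M * (2 * Real.pi)) = M := by field_simp
    linarith
  refine hfinal.trans (le_of_eq ?_)
  rw [hM, hSb, hlam]
  have hrp1 : (N:ℝ) ^ (-(2:ℝ)) = ((N:ℝ)^2)⁻¹ := by
    rw [Real.rpow_neg (by positivity), show (2:ℝ) = ((2:ℕ):ℝ) by norm_num, Real.rpow_natCast]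
  have hrp2 : (T - S) ^ (-(2:ℝ)) = ((T - S)^2)⁻¹ := by
    rw [Real.rpow_neg hTS.le, show (2:ℝ) = ((2:ℕ):ℝ) by norm_num, Real.rpow_natCast]
  rw [hrp1, hrp2]
  have hπne : Real.pi ≠ 0 := hπ.ne'
  have hcne : c ≠ 0 := hc.ne'
  have hNne : (N:ℝ) ≠ 0 := by positivity
  have hTSne : T - S ≠ 0 := hTS.ne'
  field_simp
  ring
end

section
/- For all reals c₁ < 1 and c₂ > 1 there exists a constant C depending only on c₁ and c₂ such that for all reals S < T and every ε with 0 < ε < T − S: ∫_{S+ε}^{T} (T−R)^{−c₁}·(R−S)^{−c₂} dR ≤ C·(T−S−ε)^{−c₁}·ε^{1−c₂}. In particular, if T − S ≥ 2ε then ∫_{S+ε}^{T} (T−R)^{−c₁}·(R−S)^{−c₂} dR ≤ C'·(T−S)^{−c₁}·ε^{1−c₂} for a constant C' depending only on c₁ and c₂. -/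
open MeasureTheory intervalIntegral Real

lemma rpow_half_le_aux (a x c : ℝ) (ha : 0 < a) (h1 : a/2 ≤ x) (h2 : x ≤ a) :
    x ^ (-c) ≤ 2 ^ |c| * a ^ (-c) := by
  have hx : 0 < x := lt_of_lt_of_le (half_pos ha) h1
  rcases le_total c 0 with hc | hc
  · have h3 : x ^ (-c) ≤ a ^ (-c) := Real.rpow_le_rpow hx.le h2 (neg_nonneg.mpr hc)
    have h4 : (1:ℝ) ≤ 2 ^ |c| := Real.one_le_rpow one_le_two (abs_nonneg c)
    have h5 : (0:ℝ) ≤ a ^ (-c) := Real.rpow_nonneg ha.le _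
    nlinarith
  · have h3 : x ^ (-c) ≤ (a/2) ^ (-c) :=
      Real.rpow_le_rpow_of_nonpos (half_pos ha) h1 (neg_nonpos.mpr hc)
    have h4 : (a/2) ^ (-c) = 2 ^ c * a ^ (-c) := by
      rw [Real.div_rpow ha.le (by norm_num : (0:ℝ) ≤ 2), Real.rpow_neg (by norm_num : (0:ℝ) ≤ 2)]
      field_simp
    rw [abs_of_nonneg hc]
    linarith [h4 ▸ h3]

lemma integrable_aux (c₁ c₂ S T a : ℝ) (hc₁ : c₁ < 1) (hS : S < a) (haT : a ≤ T) :
    IntervalIntegrable (fun R => (T - R) ^ (-c₁) * (R - S) ^ (-c₂)) volume a T := by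
  have hg : IntervalIntegrable (fun R => (T - R) ^ (-c₁)) volume a T := by
    have := (intervalIntegral.intervalIntegrable_rpow' (a := T - a) (b := 0)
      (r := -c₁) (by linarith)).comp_sub_left T
    simpa using this
  apply hg.mul_continuousOn
  apply ContinuousOn.rpow_const (by fun_prop)
  intro x hx
  rw [Set.uIcc_of_le haT] at hx
  left
  have : a ≤ x := hx.1
  intro h; nlinarith [sub_eq_zero.mp h]

lemma key_estimate (c₁ c₂ : ℝ) (hc₁ : c₁ < 1) (hc₂ : 1 < c₂)
    (S T ε : ℝ) (hST : S < T) (hε : 0 < ε) (hεTS : ε < T - S) :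
    (∫ R in (S + ε)..T, (T - R) ^ (-c₁) * (R - S) ^ (-c₂)) ≤
      (2 ^ |c₁| * (1/(c₂-1) + 1/(1-c₁))) * (T - S - ε) ^ (-c₁) * ε ^ (1 - c₂) := by
  set d : ℝ := T - S - ε with hd
  have hdpos : 0 < d := by simp [hd]; linarith
  set M : ℝ := S + ε + d/2 with hM
  have hMS : M - S = ε + d/2 := by rw [hM]; ring
  have hTM : T - M = d/2 := by rw [hM, hd]; ring
  have haM : S + ε ≤ M := by rw [hM]; linarith
  have hMT : M ≤ T := by rw [hM, hd]; linarith
  have hMSpos : (0:ℝ) < M - S := by rw [hMS]; linarith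
  have hK : (0:ℝ) < 2 ^ |c₁| := Real.rpow_pos_of_pos two_pos _
  -- integrability
  have hf : IntervalIntegrable (fun R => (T - R) ^ (-c₁) * (R - S) ^ (-c₂)) volume (S + ε) T :=
    integrable_aux c₁ c₂ S T (S + ε) hc₁ (by linarith) (by linarith)
  have hfA : IntervalIntegrable (fun R => (T - R) ^ (-c₁) * (R - S) ^ (-c₂)) volume (S + ε) M :=
    hf.mono_set (by rw [Set.uIcc_of_le haM, Set.uIcc_of_le (by linarith : S + ε ≤ T)]
                    exact Set.Icc_subset_Icc le_rfl hMT)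
  have hfB : IntervalIntegrable (fun R => (T - R) ^ (-c₁) * (R - S) ^ (-c₂)) volume M T :=
    integrable_aux c₁ c₂ S T M hc₁ (by linarith) hMT
  have hsplit : (∫ R in (S + ε)..T, (T - R) ^ (-c₁) * (R - S) ^ (-c₂)) =
      (∫ R in (S + ε)..M, (T - R) ^ (-c₁) * (R - S) ^ (-c₂)) +
      (∫ R in M..T, (T - R) ^ (-c₁) * (R - S) ^ (-c₂)) :=
    (intervalIntegral.integral_add_adjacent_intervals hfA hfB).symm
  -- Piece A
  have hgA : IntervalIntegrable (fun R => 2 ^ |c₁| * d ^ (-c₁) * (R - S) ^ (-c₂))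
      volume (S + ε) M := by
    apply ContinuousOn.intervalIntegrable
    apply ContinuousOn.mul continuousOn_const
    apply ContinuousOn.rpow_const (by fun_prop)
    intro x hx
    rw [Set.uIcc_of_le haM] at hx
    left
    have : S + ε ≤ x := hx.1
    intro h; nlinarith [sub_eq_zero.mp h]
  have hA : (∫ R in (S + ε)..M, (T - R) ^ (-c₁) * (R - S) ^ (-c₂)) ≤
      2 ^ |c₁| * d ^ (-c₁) * (ε ^ (1 - c₂) / (c₂ - 1)) := by
    have hmono : (∫ R in (S + ε)..M, (T - R) ^ (-c₁) * (R - S) ^ (-c₂)) ≤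
        ∫ R in (S + ε)..M, 2 ^ |c₁| * d ^ (-c₁) * (R - S) ^ (-c₂) := by
      apply intervalIntegral.integral_mono_on haM hfA hgA
      intro x hx
      have h1 : d/2 ≤ T - x := by have := hx.2; rw [← hTM]; linarith
      have h2 : T - x ≤ d := by have := hx.1; rw [hd]; linarith
      exact mul_le_mul_of_nonneg_right (rpow_half_le_aux d (T - x) c₁ hdpos h1 h2)
        (Real.rpow_nonneg (by linarith [hx.1] : (0:ℝ) ≤ x - S) _)
    have hcomp : (∫ R in (S + ε)..M, (R - S) ^ (-c₂)) = ∫ x in ε..(M - S), x ^ (-c₂) := by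
      have := intervalIntegral.integral_comp_sub_right (a := S + ε) (b := M)
        (fun x => x ^ (-c₂)) S
      simpa using this
    have hval : (∫ x in ε..(M - S), x ^ (-c₂)) =
        ((M - S) ^ (-c₂ + 1) - ε ^ (-c₂ + 1)) / (-c₂ + 1) := by
      apply integral_rpow
      right
      constructor
      · intro h; rw [neg_eq_iff_eq_neg] at h; linarith [h]
      · rw [Set.uIcc_of_le (by rw [hMS]; linarith : ε ≤ M - S)]
        intro h; exact absurd h.1 (by linarith)
    have hle : (∫ x in ε..(M - S), x ^ (-c₂)) ≤ ε ^ (1 - c₂) / (c₂ - 1) := by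
      rw [hval]
      rw [show -c₂ + 1 = 1 - c₂ by ring]
      have h0 : (0:ℝ) ≤ (M - S) ^ (1 - c₂) := Real.rpow_nonneg hMSpos.le _
      have heq : ((M - S) ^ (1 - c₂) - ε ^ (1 - c₂)) / (1 - c₂) =
          (ε ^ (1 - c₂) - (M - S) ^ (1 - c₂)) / (c₂ - 1) := by
        rw [div_eq_div_iff (by linarith : (1:ℝ) - c₂ ≠ 0) (by linarith : c₂ - 1 ≠ 0)]
        ring
      rw [heq]
      exact (div_le_div_iff_of_pos_right (by linarith : (0:ℝ) < c₂ - 1)).mpr (by linarith)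

    calc (∫ R in (S + ε)..M, (T - R) ^ (-c₁) * (R - S) ^ (-c₂))
        ≤ ∫ R in (S + ε)..M, 2 ^ |c₁| * d ^ (-c₁) * (R - S) ^ (-c₂) := hmono
      _ = 2 ^ |c₁| * d ^ (-c₁) * ∫ R in (S + ε)..M, (R - S) ^ (-c₂) := by
          rw [← intervalIntegral.integral_const_mul]
      _ ≤ 2 ^ |c₁| * d ^ (-c₁) * (ε ^ (1 - c₂) / (c₂ - 1)) := by
          apply mul_le_mul_of_nonneg_left _ (by positivity)
          rw [hcomp]; exact hle
  -- Piece B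
  have hgB : IntervalIntegrable (fun R => (T - R) ^ (-c₁) * (M - S) ^ (-c₂)) volume M T := by
    have hg : IntervalIntegrable (fun R => (T - R) ^ (-c₁)) volume M T := by
      have := (intervalIntegral.intervalIntegrable_rpow' (a := T - M) (b := 0)
        (r := -c₁) (by linarith)).comp_sub_left T
      simpa using this
    exact hg.mul_const _
  have hB : (∫ R in M..T, (T - R) ^ (-c₁) * (R - S) ^ (-c₂)) ≤
      ε ^ (1 - c₂) * (2 ^ |c₁| * d ^ (-c₁)) / (1 - c₁) := by
    have hmono : (∫ R in M..T, (T - R) ^ (-c₁) * (R - S) ^ (-c₂)) ≤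
        ∫ R in M..T, (T - R) ^ (-c₁) * (M - S) ^ (-c₂) := by
      apply intervalIntegral.integral_mono_on hMT hfB hgB
      intro x hx
      apply mul_le_mul_of_nonneg_left _ (Real.rpow_nonneg (by linarith [hx.2] : (0:ℝ) ≤ T - x) _)
      exact Real.rpow_le_rpow_of_nonpos hMSpos (by linarith [hx.1]) (by linarith)
    have hcomp : (∫ R in M..T, (T - R) ^ (-c₁)) = ∫ x in (0:ℝ)..(d/2), x ^ (-c₁) := by
      have := intervalIntegral.integral_comp_sub_left (a := M) (b := T)
        (fun x => x ^ (-c₁)) T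
      rw [this, sub_self, hTM]
    have hval : (∫ x in (0:ℝ)..(d/2), x ^ (-c₁)) = (d/2) ^ (1 - c₁) / (1 - c₁) := by
      rw [integral_rpow (Or.inl (by linarith))]
      rw [Real.zero_rpow (by intro h; linarith [h] : -c₁ + 1 ≠ 0)]
      rw [show -c₁ + 1 = 1 - c₁ by ring]
      ring
    have hprod : (M - S) ^ (-c₂) * (d/2) ^ (1 - c₁) ≤ ε ^ (1 - c₂) * (2 ^ |c₁| * d ^ (-c₁)) := by
      have e1 : (d/2) ^ (1 - c₁) = (d/2) * (d/2) ^ (-c₁) := by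
        rw [show (1 : ℝ) - c₁ = 1 + -c₁ by ring, Real.rpow_add (half_pos hdpos), Real.rpow_one]
      have e2 : (M - S) ^ (-c₂) * (M - S) = (M - S) ^ (1 - c₂) := by
        rw [show (1 : ℝ) - c₂ = -c₂ + 1 by ring, Real.rpow_add hMSpos, Real.rpow_one]
      have i1 : (M - S) ^ (-c₂) * (d/2) ≤ (M - S) ^ (1 - c₂) := by
        rw [← e2]
        apply mul_le_mul_of_nonneg_left _ (Real.rpow_nonneg hMSpos.le _)
        rw [hMS]; linarith
      have i2 : (M - S) ^ (1 - c₂) ≤ ε ^ (1 - c₂) :=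
        Real.rpow_le_rpow_of_nonpos hε (by rw [hMS]; linarith) (by linarith)
      have i3 : (d/2) ^ (-c₁) ≤ 2 ^ |c₁| * d ^ (-c₁) :=
        rpow_half_le_aux d (d/2) c₁ hdpos le_rfl (by linarith)
      calc (M - S) ^ (-c₂) * (d/2) ^ (1 - c₁)
          = ((M - S) ^ (-c₂) * (d/2)) * (d/2) ^ (-c₁) := by rw [e1]; ring
        _ ≤ ε ^ (1 - c₂) * (2 ^ |c₁| * d ^ (-c₁)) := by
            apply mul_le_mul (i1.trans i2) i3 (Real.rpow_nonneg (by positivity) _)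
              (Real.rpow_nonneg hε.le _)
    calc (∫ R in M..T, (T - R) ^ (-c₁) * (R - S) ^ (-c₂))
        ≤ ∫ R in M..T, (T - R) ^ (-c₁) * (M - S) ^ (-c₂) := hmono
      _ = (M - S) ^ (-c₂) * ∫ R in M..T, (T - R) ^ (-c₁) := by
          rw [← intervalIntegral.integral_const_mul]
          congr 1; ext R; ring
      _ = (M - S) ^ (-c₂) * ((d/2) ^ (1 - c₁) / (1 - c₁)) := by rw [hcomp, hval]
      _ = ((M - S) ^ (-c₂) * (d/2) ^ (1 - c₁)) / (1 - c₁) := by ring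
      _ ≤ ε ^ (1 - c₂) * (2 ^ |c₁| * d ^ (-c₁)) / (1 - c₁) := by
          apply div_le_div_of_nonneg_right hprod (by linarith)
  rw [hsplit]
  have : 2 ^ |c₁| * d ^ (-c₁) * (ε ^ (1 - c₂) / (c₂ - 1)) +
      ε ^ (1 - c₂) * (2 ^ |c₁| * d ^ (-c₁)) / (1 - c₁) =
      (2 ^ |c₁| * (1/(c₂-1) + 1/(1-c₁))) * d ^ (-c₁) * ε ^ (1 - c₂) := by
    have h1 : c₂ - 1 ≠ 0 := by linarith
    have h2 : (1:ℝ) - c₁ ≠ 0 := by linarith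
    field_simp
  linarith [hA, hB]

/-- For exponents `c₁ < 1` and `c₂ > 1` there are constants `C, C'` depending only on
`c₁, c₂` such that for `S < T` and `0 < ε < T − S`:
`∫_{S+ε}^T (T−R)^{−c₁}(R−S)^{−c₂} dR ≤ C·(T−S−ε)^{−c₁}·ε^{1−c₂}`, and if moreover
`T − S ≥ 2ε` then the integral is at most `C'·(T−S)^{−c₁}·ε^{1−c₂}`. -/
theorem singular_time_integral_cutoff_estimate
    (c₁ c₂ : ℝ) (hc₁ : c₁ < 1) (hc₂ : 1 < c₂) :
    (∃ C : ℝ, 0 < C ∧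
      ∀ S T ε : ℝ, S < T → 0 < ε → ε < T - S →
        (∫ R in (S + ε)..T, (T - R) ^ (-c₁) * (R - S) ^ (-c₂)) ≤
          C * (T - S - ε) ^ (-c₁) * ε ^ (1 - c₂)) ∧
    (∃ C' : ℝ, 0 < C' ∧
      ∀ S T ε : ℝ, S < T → 0 < ε → ε < T - S → 2 * ε ≤ T - S →
        (∫ R in (S + ε)..T, (T - R) ^ (-c₁) * (R - S) ^ (-c₂)) ≤
          C' * (T - S) ^ (-c₁) * ε ^ (1 - c₂)) := by
  set C : ℝ := 2 ^ |c₁| * (1/(c₂-1) + 1/(1-c₁)) with hC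
  have hK : (0:ℝ) < 2 ^ |c₁| := Real.rpow_pos_of_pos two_pos _
  have hCpos : 0 < C := by
    apply mul_pos hK
    have h1 : (0:ℝ) < 1/(c₂-1) := div_pos one_pos (by linarith)
    have h2 : (0:ℝ) < 1/(1-c₁) := div_pos one_pos (by linarith)
    linarith
  constructor
  · exact ⟨C, hCpos, fun S T ε h1 h2 h3 => key_estimate c₁ c₂ hc₁ hc₂ S T ε h1 h2 h3⟩
  · refine ⟨2 ^ |c₁| * C, by positivity, fun S T ε h1 h2 h3 h4 => ?_⟩
    have key := key_estimate c₁ c₂ hc₁ hc₂ S T ε h1 h2 h3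
    have hTS : 0 < T - S := by linarith
    have hhalf : (T - S) ^ (-c₁) * 2 ^ |c₁| ≥ (T - S - ε) ^ (-c₁) := by
      have := rpow_half_le_aux (T - S) (T - S - ε) c₁ hTS (by linarith) (by linarith)
      linarith [this]
    calc (∫ R in (S + ε)..T, (T - R) ^ (-c₁) * (R - S) ^ (-c₂))
        ≤ C * (T - S - ε) ^ (-c₁) * ε ^ (1 - c₂) := key
      _ ≤ C * (2 ^ |c₁| * (T - S) ^ (-c₁)) * ε ^ (1 - c₂) := by
          apply mul_le_mul_of_nonneg_right _ (Real.rpow_nonneg h2.le _)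
          apply mul_le_mul_of_nonneg_left _ hCpos.le
          linarith [hhalf]
      _ = 2 ^ |c₁| * C * (T - S) ^ (-c₁) * ε ^ (1 - c₂) := by ring
end
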